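/- arXiv:2605.31541 — 2 statements merged into one kernel-verified Lean document; each statement's English description precedes it below -/
import Mathlib

section
/- Let f : ℝ² → ℝ be α-Hölder continuous with 0 < α ≤ 1 and Hölder seminorm [f]_{C^α}. Suppose for some reals b < a the superlevel set E_a = {x : f(x) > a} is nonempty with C¹ boundary and connected, and E_b = {x : f(x) > b} has finite Lebesgue measure. Then [f]_{C^α} ≥ (a − b) · (2 · diam(E_a) / |E_b|)^α. -/
open MeasureTheory Metric Set

lemma aux_slab {s : Set (EuclideanSpace ℝ (Fin 2))} (hs : IsConnected s) {δ : ℝ} (hδ : 0 < δ)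
    {x y : EuclideanSpace ℝ (Fin 2)} (hx : x ∈ s) (hy : y ∈ s) :
    ENNReal.ofReal (2 * δ * dist x y) ≤ volume (Metric.thickening δ s) := by
  rcases eq_or_ne x y with rfl | hxy
  · simp
  have hn : 0 < ‖y - x‖ := by
    rw [norm_pos_iff, sub_ne_zero]; exact (Ne.symm hxy)
  set u : EuclideanSpace ℝ (Fin 2) := ‖y - x‖⁻¹ • (y - x) with hu_def
  have hu_norm : ‖u‖ = 1 := by
    rw [hu_def, norm_smul, norm_inv, norm_norm, inv_mul_cancel₀ hn.ne']
  obtain ⟨b, hb⟩ : ∃ b : OrthonormalBasis (Fin 2) ℝ (EuclideanSpace ℝ (Fin 2)),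
      ∀ i ∈ ({0} : Set (Fin 2)), b i = (fun _ => u) i := by
    apply Orthonormal.exists_orthonormalBasis_extension_of_card_eq
    · simp [finrank_euclideanSpace]
    · constructor
      · rintro ⟨i, hi⟩
        simpa using hu_norm
      · rintro ⟨i, hi⟩ ⟨j, hj⟩ hij
        exact absurd (Subtype.ext ((show i = 0 from hi).trans (show j = 0 from hj).symm)) hij
  have hb0 : b 0 = u := hb 0 rfl
  set w : EuclideanSpace ℝ (Fin 2) := b 1 with hw_def
  have hw_norm : ‖w‖ = 1 := b.orthonormal.1 1
  have huw : inner ℝ u w = (0 : ℝ) := by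
    rw [← hb0, hw_def]
    exact b.orthonormal.2 (by decide : (0 : Fin 2) ≠ 1)
  have hww : inner ℝ w w = (1 : ℝ) := by
    rw [real_inner_self_eq_norm_sq, hw_norm]; norm_num
  set T : EuclideanSpace ℝ (Fin 2) ≃ᵐ ℝ × ℝ :=
    (b.measurableEquiv.trans ((MeasurableEquiv.toLp 2 (Fin 2 → ℝ)).symm)).trans
      MeasurableEquiv.finTwoArrow with hT_def
  have hT_mp : MeasurePreserving T volume volume :=
    ((volume_preserving_finTwoArrow ℝ).comp
      ((EuclideanSpace.volume_preserving_symm_measurableEquiv_toLp (Fin 2)).comp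
        b.measurePreserving_measurableEquiv))
  have hT_apply : ∀ p, T p = (inner ℝ u p, inner ℝ w p) := by
    intro p
    have h0 : (T p).1 = b.repr p 0 := rfl
    have h1 : (T p).2 = b.repr p 1 := rfl
    have e0 : b.repr p 0 = inner ℝ u p := by rw [b.repr_apply_apply, hb0]
    have e1 : b.repr p 1 = inner ℝ w p := by rw [b.repr_apply_apply]
    ext
    · rw [h0, e0]
    · rw [h1, e1]
  set c0 : ℝ := inner ℝ u x with hc0
  set c1 : ℝ := inner ℝ u y with hc1
  have hc : c1 - c0 = ‖y - x‖ := by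
    rw [hc0, hc1, ← inner_sub_right, hu_def, real_inner_smul_left,
      real_inner_self_eq_norm_sq]
    field_simp
  have hdist : dist x y = ‖y - x‖ := by rw [dist_eq_norm, norm_sub_rev]
  -- connectedness: the projection hits every value in [c0, c1]
  have himg : Icc c0 c1 ⊆ (fun p => (inner ℝ u p : ℝ)) '' s := by
    have hcont : Continuous fun p : EuclideanSpace ℝ (Fin 2) => (inner ℝ u p : ℝ) :=
      continuous_const.inner continuous_id
    have h := (hs.image _ hcont.continuousOn).isPreconnected
    exact h.ordConnected.out (mem_image_of_mem _ hx) (mem_image_of_mem _ hy)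
  set A : Set (ℝ × ℝ) := T '' (Metric.thickening δ s) with hA_def
  have hA : MeasurableSet A := by
    rw [hA_def, MeasurableEquiv.image_eq_preimage_symm]
    exact T.symm.measurable isOpen_thickening.measurableSet
  have hvolA : volume (Metric.thickening δ s) = volume A := by
    have := hT_mp.measure_preimage hA.nullMeasurableSet
    rw [← this, hA_def, Set.preimage_image_eq _ T.injective]
  -- slice bound
  have hslice : ∀ t ∈ Icc c0 c1, ENNReal.ofReal (2 * δ) ≤ volume (Prod.mk t ⁻¹' A) := by
    intro t ht
    obtain ⟨p, hp, hpt⟩ := himg ht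
    set g : ℝ := inner ℝ w p with hg
    have hsub : Ioo (g - δ) (g + δ) ⊆ Prod.mk t ⁻¹' A := by
      intro r hr
      refine ⟨p + (r - g) • w, ?_, ?_⟩
      · rw [mem_thickening_iff]
        refine ⟨p, hp, ?_⟩
        rw [dist_eq_norm, add_sub_cancel_left, norm_smul, Real.norm_eq_abs, hw_norm, mul_one]
        rw [mem_Ioo] at hr
        rw [abs_lt]
        constructor <;> linarith [hr.1, hr.2]
      · rw [hT_apply]
        have e1 : inner ℝ u (p + (r - g) • w) = (t : ℝ) := by
          rw [inner_add_right, real_inner_smul_right, huw]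
          simpa using hpt
        have e2 : inner ℝ w (p + (r - g) • w) = (r : ℝ) := by
          rw [inner_add_right, real_inner_smul_right, hww]; rw [← hg]; ring
        rw [e1, e2]
    calc ENNReal.ofReal (2 * δ) = volume (Ioo (g - δ) (g + δ)) := by
          rw [Real.volume_Ioo]; ring_nf
      _ ≤ volume (Prod.mk t ⁻¹' A) := measure_mono hsub
  -- Fubini
  have hfub : volume A = ∫⁻ t, volume (Prod.mk t ⁻¹' A) := by
    rw [Measure.volume_eq_prod, Measure.prod_apply hA]
  calc ENNReal.ofReal (2 * δ * dist x y)
      = ENNReal.ofReal (2 * δ) * ENNReal.ofReal (c1 - c0) := by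
        rw [← ENNReal.ofReal_mul (by positivity), hdist, hc]
    _ = ∫⁻ _ in Icc c0 c1, ENNReal.ofReal (2 * δ) := by
        rw [setLIntegral_const, Real.volume_Icc]
    _ ≤ ∫⁻ t in Icc c0 c1, volume (Prod.mk t ⁻¹' A) := by
        apply setLIntegral_mono (measurable_measure_prodMk_left hA) hslice
    _ ≤ ∫⁻ t, volume (Prod.mk t ⁻¹' A) := setLIntegral_le_lintegral _ _
    _ = volume A := hfub.symm
    _ = volume (Metric.thickening δ s) := hvolA.symm

/-- If `f : ℝ² → ℝ` is `α`-Hölder with constant `H` (in particular if `H` is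
its Hölder seminorm), `b < a`, the superlevel set `E_a = {f > a}` is nonempty and connected,
and `E_b = {f > b}` has finite Lebesgue measure, then
`H ≥ (a - b) * (2 * diam E_a / |E_b|) ^ α`. -/
theorem stmt0_holder_seminorm_lower_bound
    (f : EuclideanSpace ℝ (Fin 2) → ℝ) (α H a b : ℝ)
    (hα : 0 < α) (hα1 : α ≤ 1) (hH : 0 ≤ H)
    (hHolder : ∀ x y, |f x - f y| ≤ H * dist x y ^ α)
    (hab : b < a)
    (hne : ({x | a < f x}).Nonempty)
    (hconn : IsConnected {x | a < f x})
    (hfin : volume {x | b < f x} < ⊤) :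
    (a - b) * (2 * Metric.diam {x | a < f x} / (volume {x | b < f x}).toReal) ^ α ≤ H := by
  -- H must be positive
  have hH0 : 0 < H := by
    rcases hH.lt_or_eq with h | h
    · exact h
    · exfalso
      obtain ⟨x0, hx0⟩ := hne
      have hconst : ∀ x, f x = f x0 := by
        intro x
        have h1 := hHolder x x0
        rw [← h, zero_mul] at h1
        have h2 := abs_nonneg (f x - f x0)
        have : |f x - f x0| = 0 := le_antisymm h1 h2
        have := abs_eq_zero.mp this
        linarith
      have huniv : {x | b < f x} = univ := by
        apply eq_univ_of_forall
        intro x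
        have := hconst x
        simp only [mem_setOf_eq, this]
        exact lt_trans hab hx0
      rw [huniv] at hfin
      rw [measure_univ_of_isAddLeftInvariant (volume : Measure (EuclideanSpace ℝ (Fin 2)))] at hfin
      exact absurd hfin (lt_irrefl _)
  rcases le_or_gt (Metric.diam {x | a < f x}) 0 with hd | hd
  · have hd0 : Metric.diam {x | a < f x} = 0 := le_antisymm hd Metric.diam_nonneg
    rw [hd0]
    norm_num [Real.zero_rpow hα.ne']
    exact hH
  rcases le_or_gt ((volume {x | b < f x}).toReal) 0 with hv | hv
  · have hv0 : (volume {x | b < f x}).toReal = 0 := le_antisymm hv ENNReal.toReal_nonneg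
    rw [hv0, div_zero, Real.zero_rpow hα.ne', mul_zero]
    exact hH
  set d : ℝ := Metric.diam {x | a < f x} with hd_def
  set v : ℝ := (volume {x | b < f x}).toReal with hv_def
  set δ : ℝ := ((a - b) / H) ^ (1 / α) with hδ_def
  have hab' : 0 < a - b := by linarith
  have hX : 0 < (a - b) / H := div_pos hab' hH0
  have hδpos : 0 < δ := Real.rpow_pos_of_pos hX _
  have hδα : δ ^ α = (a - b) / H := by
    rw [hδ_def, ← Real.rpow_mul hX.le, one_div, inv_mul_cancel₀ hα.ne', Real.rpow_one]
  -- the δ-thickening of E_a is contained in E_b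
  have hsub : Metric.thickening δ {x | a < f x} ⊆ {x | b < f x} := by
    intro z hz
    rw [mem_thickening_iff] at hz
    obtain ⟨p, hp, hzp⟩ := hz
    have h1 := hHolder z p
    have h2 : H * dist z p ^ α < H * δ ^ α :=
      mul_lt_mul_of_pos_left (Real.rpow_lt_rpow dist_nonneg hzp hα) hH0
    have h3 : H * δ ^ α = a - b := by
      rw [hδα, mul_div_cancel₀ _ hH0.ne']
    have h4 : f p - f z ≤ |f z - f p| := by
      rw [abs_sub_comm]; exact le_abs_self _
    have hfp : a < f p := hp
    show b < f z
    linarith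
  -- the key diameter bound
  have hkey : ∀ p ∈ {x | a < f x}, ∀ q ∈ {x | a < f x}, dist p q ≤ v / (2 * δ) := by
    intro p hp q hq
    have h1 := aux_slab hconn hδpos hp hq
    have h3 : ENNReal.ofReal (2 * δ * dist p q) ≤ volume {x | b < f x} :=
      h1.trans (measure_mono hsub)
    have h4 : 2 * δ * dist p q ≤ v := by
      rw [ENNReal.ofReal_le_iff_le_toReal hfin.ne] at h3
      exact h3
    rw [le_div_iff₀ (by positivity)]
    linarith
  have hdiam : d ≤ v / (2 * δ) := Metric.diam_le_of_forall_dist_le (by positivity) hkey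
  have h5 : 2 * d / v ≤ 1 / δ := by
    rw [div_le_div_iff₀ hv hδpos]
    have : d * (2 * δ) ≤ v := by
      rw [← le_div_iff₀ (by positivity)]; exact hdiam
    nlinarith
  have h6 : (2 * d / v) ^ α ≤ (1 / δ) ^ α := Real.rpow_le_rpow (by positivity) h5 hα.le
  have h7 : (1 / δ) ^ α = H / (a - b) := by
    rw [one_div, Real.inv_rpow hδpos.le, hδα, inv_div]
  calc (a - b) * (2 * d / v) ^ α ≤ (a - b) * (H / (a - b)) :=
        mul_le_mul_of_nonneg_left (h6.trans_eq h7) hab'.le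
    _ = H := by field_simp
end

section
/- If E_b contains the closed δ-neighborhood of a connected bounded set E_a in ℝ², then the Lebesgue measure of E_b is at least 2δ · diam(E_a). -/
open MeasureTheory Metric Set

set_option maxHeartbeats 1000000

/-- If `E_b` contains the closed `δ`-neighborhood of a nonempty bounded
connected set `E_a ⊆ ℝ²`, then the Lebesgue measure of `E_b` is at least `2δ·diam E_a`. -/
theorem stmt1_neighborhood_area_lower_bound
    (Ea Eb : Set (EuclideanSpace ℝ (Fin 2))) (δ : ℝ) (hδ : 0 < δ)
    (hne : Ea.Nonempty) (hbdd : Bornology.IsBounded Ea) (hconn : IsConnected Ea)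
    (hsub : {x | EMetric.infEdist x Ea ≤ ENNReal.ofReal δ} ⊆ Eb) :
    ENNReal.ofReal (2 * δ * Metric.diam Ea) ≤ volume Eb := by
  set d := Metric.diam Ea with hd
  have hd0 : 0 ≤ d := Metric.diam_nonneg
  rcases eq_or_lt_of_le hd0 with hd0' | hd0'
  · simp [← hd0']
  -- the closure K of Ea
  set K := closure Ea with hK
  have hKc : IsCompact K := hbdd.isCompact_closure
  have hKne : K.Nonempty := hne.closure
  have hKconn : IsPreconnected K := (hconn.closure).isPreconnected
  have hdK : Metric.diam K = d := Metric.diam_closure Ea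
  -- points attaining the diameter
  obtain ⟨⟨a, b⟩, habm, hmax⟩ := (hKc.prod hKc).exists_isMaxOn (hKne.prod hKne)
    (continuous_dist.continuousOn)
  have ha : a ∈ K := habm.1
  have hb : b ∈ K := habm.2
  have hmax' : ∀ x ∈ K, ∀ y ∈ K, dist x y ≤ dist a b := by
    intro x hx y hy
    have h := hmax (Set.mk_mem_prod hx hy)
    simpa using h
  have hdab : dist a b = d := by
    apply le_antisymm
    · rw [← hdK]; exact Metric.dist_le_diam_of_mem hbdd.closure ha hb
    · rw [← hdK]; exact Metric.diam_le_of_forall_dist_le dist_nonneg hmax'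
  have hba : ‖b - a‖ = d := by rw [← hdab, dist_eq_norm, norm_sub_rev]
  have hdne : d ≠ 0 := ne_of_gt hd0'
  -- unit vector along b - a
  set u : EuclideanSpace ℝ (Fin 2) := d⁻¹ • (b - a) with hu
  have hu1 : ‖u‖ = 1 := by
    rw [hu, norm_smul, hba, norm_inv, Real.norm_of_nonneg hd0, inv_mul_cancel₀ hdne]
  -- orthonormal basis with B 0 = u
  have hcard : Module.finrank ℝ (EuclideanSpace ℝ (Fin 2)) = Fintype.card (Fin 2) := by
    simp
  have hortho : Orthonormal ℝ (({0} : Set (Fin 2)).restrict (fun _ : Fin 2 => u)) := by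
    constructor
    · intro i; exact hu1
    · intro i j hij
      exact absurd (Subtype.ext (i.2.trans j.2.symm)) hij
  obtain ⟨B, hB⟩ := hortho.exists_orthonormalBasis_extension_of_card_eq hcard
  have hB0 : B 0 = u := hB 0 rfl
  -- the coordinate map F : E → ℝ × ℝ
  set F : EuclideanSpace ℝ (Fin 2) → ℝ × ℝ :=
    fun x => (MeasurableEquiv.finTwoArrow
      ((MeasurableEquiv.toLp 2 (Fin 2 → ℝ)).symm (B.repr (x - a)))) with hF
  have hFcoord : ∀ x, F x = (inner ℝ (B 0) (x - a), inner ℝ (B 1) (x - a)) := by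
    intro x
    simp [hF, MeasurableEquiv.finTwoArrow, MeasurableEquiv.coe_toLp_symm,
      B.repr_apply_apply]
    exact ⟨by rw [inner_sub_right], by rw [inner_sub_right]⟩
  have hFmp : MeasurePreserving F volume volume := by
    exact (MeasureTheory.volume_preserving_finTwoArrow ℝ).comp
      ((EuclideanSpace.volume_preserving_symm_measurableEquiv_toLp (Fin 2)).comp
        ((B.measurePreserving_repr).comp (measurePreserving_sub_right volume a)))
  have hFinj : Function.Injective F := by
    apply Function.Injective.comp (MeasurableEquiv.finTwoArrow).injective
    apply Function.Injective.comp (MeasurableEquiv.toLp 2 (Fin 2 → ℝ)).symm.injective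
    apply Function.Injective.comp B.repr.injective
    exact sub_left_injective
  -- the neighborhood set N
  set N : Set (EuclideanSpace ℝ (Fin 2)) := {x | EMetric.infEdist x Ea ≤ ENNReal.ofReal δ}
    with hN
  have hNcl : IsClosed N := isClosed_le EMetric.continuous_infEdist continuous_const
  have hNbd : Bornology.IsBounded N := by
    have : N = Metric.cthickening δ Ea := rfl
    rw [this]; exact hbdd.cthickening
  have hNcompact : IsCompact N := Metric.isCompact_of_isClosed_isBounded hNcl hNbd
  set M : Set (ℝ × ℝ) := F '' N with hM
  have hFc : Continuous F := by
    have : F = fun x => ((inner ℝ (B 0) (x - a) : ℝ), (inner ℝ (B 1) (x - a) : ℝ)) :=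
      funext hFcoord
    rw [this]
    exact (continuous_const.inner (continuous_id.sub continuous_const)).prodMk
      (continuous_const.inner (continuous_id.sub continuous_const))
  have hMmeas : MeasurableSet M := ((hNcompact.image hFc).isClosed).measurableSet
  have hvolNM : volume N = volume M := by
    rw [← hFmp.measure_preimage hMmeas.nullMeasurableSet, hM,
      Set.preimage_image_eq N hFinj]
  -- inner products of basis vectors
  have hB01 : (inner ℝ (B 0) (B 1) : ℝ) = 0 := B.orthonormal.2 (by decide)
  have hB11 : (inner ℝ (B 1) (B 1) : ℝ) = 1 := by
    rw [real_inner_self_eq_norm_mul_norm, B.orthonormal.1 1]; norm_num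
  -- f a = 0, f b = d for f x = ⟪u, x - a⟫
  have hfa : (inner ℝ u (a - a) : ℝ) = 0 := by simp
  have hfb : (inner ℝ u (b - a) : ℝ) = d := by
    rw [hu, real_inner_smul_left, real_inner_self_eq_norm_sq, hba]
    field_simp
  -- slice bound
  have hslice : ∀ t ∈ Icc (0:ℝ) d, ENNReal.ofReal (2 * δ) ≤ volume (Prod.mk t ⁻¹' M) := by
    intro t ht
    -- intermediate value: find p ∈ K with ⟪u, p - a⟫ = t
    have hIVT : Icc (0:ℝ) d ⊆ (fun x => (inner ℝ u (x - a) : ℝ)) '' K := by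
      have := hKconn.intermediate_value ha hb
        (f := fun x => (inner ℝ u (x - a) : ℝ))
        ((continuous_const.inner (continuous_id.sub continuous_const)).continuousOn)
      simp only [hfa, hfb] at this
      exact this
    obtain ⟨p, hpK, hpt⟩ := hIVT ht
    set c : ℝ := inner ℝ (B 1) (p - a) with hc
    have hsub2 : Icc (c - δ) (c + δ) ⊆ Prod.mk t ⁻¹' M := by
      intro s hs
      set x : EuclideanSpace ℝ (Fin 2) := p + (s - c) • B 1 with hx
      have hxN : x ∈ N := by
        have hdist : dist x p ≤ δ := by
          rw [hx, dist_eq_norm, add_sub_cancel_left, norm_smul]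
          simp only [B.orthonormal.1 1, mul_one]
          rw [Real.norm_eq_abs, abs_le]
          constructor <;> [linarith [hs.1]; linarith [hs.2]]
        have : EMetric.infEdist x Ea = EMetric.infEdist x K := (EMetric.infEdist_closure).symm
        rw [hN, Set.mem_setOf_eq, this]
        calc EMetric.infEdist x K ≤ edist x p := EMetric.infEdist_le_edist_of_mem hpK
          _ ≤ ENNReal.ofReal δ := by
            rw [edist_dist]; exact ENNReal.ofReal_le_ofReal hdist
      have hFx : F x = (t, s) := by
        rw [hFcoord]
        have hxa : x - a = (p - a) + (s - c) • B 1 := by rw [hx]; abel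
        rw [hxa]
        have h1 : (inner ℝ (B 0) (p - a) : ℝ) = t := by rw [hB0]; exact hpt
        simp only [inner_add_right, real_inner_smul_right, hB01, hB11, h1, ← hc]
        norm_num
      exact ⟨x, hxN, hFx⟩
    calc ENNReal.ofReal (2 * δ) = volume (Icc (c - δ) (c + δ)) := by
          rw [Real.volume_Icc]; ring_nf
      _ ≤ volume (Prod.mk t ⁻¹' M) := measure_mono hsub2
  -- Tonelli / Fubini lower bound
  have hMvol : ENNReal.ofReal (2 * δ * d) ≤ volume M := by
    have hMprod : volume M = ∫⁻ t, volume (Prod.mk t ⁻¹' M) := by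
      rw [MeasureTheory.Measure.volume_eq_prod, MeasureTheory.Measure.prod_apply hMmeas]
    rw [hMprod]
    calc ENNReal.ofReal (2 * δ * d)
        = ENNReal.ofReal (2 * δ) * volume (Icc (0:ℝ) d) := by
          rw [Real.volume_Icc, ← ENNReal.ofReal_mul (by positivity)]
          norm_num
      _ = ∫⁻ _ in Icc (0:ℝ) d, ENNReal.ofReal (2 * δ) := by
          rw [setLIntegral_const]
      _ ≤ ∫⁻ t in Icc (0:ℝ) d, volume (Prod.mk t ⁻¹' M) := by
          refine setLIntegral_mono (measurable_measure_prodMk_left hMmeas) hslice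
      _ ≤ ∫⁻ t, volume (Prod.mk t ⁻¹' M) := setLIntegral_le_lintegral _ _
  calc ENNReal.ofReal (2 * δ * d) ≤ volume M := hMvol
    _ = volume N := hvolNM.symm
    _ ≤ volume Eb := measure_mono hsub
end
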